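/- Let n ≥ 1 and let Ω ⊆ EuclideanSpace ℝ (Fin n) be contained in the ball Metric.ball 0 R and star-shaped with respect to every point of Metric.ball 0 ρ, where 0 < ρ ≤ R. Then for all x, y in the frontier of Ω, writing α := Real.arccos (⟪x, y⟫ / (‖x‖ * ‖y‖)) for the angle between x and y, one has |‖x‖ - ‖y‖| ≤ (R / ρ) * Real.sqrt (R^2 - ρ^2) * α. -/

import Mathlib

open scoped RealInnerProductSpace

set_option maxHeartbeats 1000000

/-- Antitonicity of `arccos`. -/
private lemma arccos_anti {a b : ℝ} (h : a ≤ b) : Real.arccos b ≤ Real.arccos a := by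
  simp only [Real.arccos_eq_pi_div_two_sub_arcsin]
  have := Real.monotone_arcsin h
  linarith

/-- The key scalar inequality: if `ρ ≤ s ≤ r`, `|c| ≤ 1` and the quadratic
`(1-t)²ρ² ≤ s² - 2t(rsc) + t²r²` holds for all `t ∈ [0,1]`, then
`r - s ≤ (r/ρ)√(r²-ρ²) · arccos c`. -/
private lemma key_scalar (ρ r s c : ℝ) (hρ : 0 < ρ) (hρs : ρ ≤ s) (hsr : s ≤ r)
    (hc1 : -1 ≤ c) (hc2 : c ≤ 1)
    (h : ∀ t : ℝ, 0 ≤ t → t ≤ 1 →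
      (1 - t) ^ 2 * ρ ^ 2 ≤ s ^ 2 - 2 * t * (r * s * c) + t ^ 2 * r ^ 2) :
    r - s ≤ r / ρ * Real.sqrt (r ^ 2 - ρ ^ 2) * Real.arccos c := by
  have hs : 0 < s := lt_of_lt_of_le hρ hρs
  have hr : 0 < r := lt_of_lt_of_le hs hsr
  have ha2 : (0:ℝ) ≤ r ^ 2 - ρ ^ 2 := by nlinarith
  have ha : 0 ≤ Real.sqrt (r ^ 2 - ρ ^ 2) := Real.sqrt_nonneg _
  have haa : Real.sqrt (r ^ 2 - ρ ^ 2) ^ 2 = r ^ 2 - ρ ^ 2 := Real.sq_sqrt ha2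
  have hα0 : 0 ≤ Real.arccos c := Real.arccos_nonneg c
  by_cases hcase : r * s * c < ρ ^ 2
  · -- "large angle" case
    have hcρ : c ≤ ρ / r := by
      rw [le_div_iff₀ hr]
      nlinarith
    have hmono : Real.arccos (ρ / r) ≤ Real.arccos c := arccos_anti hcρ
    have hρr1 : ρ / r ≤ 1 := (div_le_one hr).mpr (hρs.trans hsr)
    have key1 : Real.sqrt (r ^ 2 - ρ ^ 2) ≤ r * Real.arccos (ρ / r) := by
      have h1 : Real.sqrt (r ^ 2 - ρ ^ 2) = r * Real.sqrt (1 - (ρ / r) ^ 2) := by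
        rw [← Real.sqrt_sq hr.le, ← Real.sqrt_mul (by positivity)]
        congr 1
        field_simp
        rw [Real.sq_sqrt (sq_nonneg r)]
      rw [h1, ← Real.sin_arccos]
      have := Real.sin_le (Real.arccos_nonneg (ρ / r))
      nlinarith [this]
    calc r - s ≤ (r ^ 2 - ρ ^ 2) / ρ := by rw [le_div_iff₀ hρ]; nlinarith
      _ = Real.sqrt (r ^ 2 - ρ ^ 2) * Real.sqrt (r ^ 2 - ρ ^ 2) / ρ := by
          rw [← sq, haa]
      _ ≤ (r * Real.arccos (ρ / r)) * Real.sqrt (r ^ 2 - ρ ^ 2) / ρ := by gcongr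
      _ ≤ (r * Real.arccos c) * Real.sqrt (r ^ 2 - ρ ^ 2) / ρ := by gcongr
      _ = r / ρ * Real.sqrt (r ^ 2 - ρ ^ 2) * Real.arccos c := by ring
  · -- "small angle" case
    push_neg at hcase
    by_cases hrρ : r ≤ ρ
    · -- degenerate: r = s = ρ
      have h0 : r - s ≤ 0 := by linarith
      have hRHS : 0 ≤ r / ρ * Real.sqrt (r ^ 2 - ρ ^ 2) * Real.arccos c :=
        mul_nonneg (mul_nonneg (by positivity) ha) hα0
      linarith
    push_neg at hrρ
    have hA : (0:ℝ) < r ^ 2 - ρ ^ 2 := by nlinarith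
    set t : ℝ := (r * s * c - ρ ^ 2) / (r ^ 2 - ρ ^ 2) with ht_def
    have hsc : s * c ≤ s := by nlinarith
    have ht0 : 0 ≤ t := div_nonneg (by linarith) hA.le
    have ht1 : t ≤ 1 := by
      rw [ht_def, div_le_one hA]
      nlinarith
    have hq := h t ht0 ht1
    have hG : (r * s * c - ρ ^ 2) ^ 2 ≤ (r ^ 2 - ρ ^ 2) * (s ^ 2 - ρ ^ 2) := by
      have expand : (s ^ 2 - 2 * t * (r * s * c) + t ^ 2 * r ^ 2 - (1 - t) ^ 2 * ρ ^ 2)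
          * (r ^ 2 - ρ ^ 2)
          = (r ^ 2 - ρ ^ 2) * (s ^ 2 - ρ ^ 2) - (r * s * c - ρ ^ 2) ^ 2 := by
        rw [ht_def]
        field_simp
        ring
      have h0 : 0 ≤ (s ^ 2 - 2 * t * (r * s * c) + t ^ 2 * r ^ 2 - (1 - t) ^ 2 * ρ ^ 2)
          * (r ^ 2 - ρ ^ 2) := mul_nonneg (by linarith) hA.le
      rw [expand] at h0
      linarith
    have hw2 : (0:ℝ) ≤ 1 - c ^ 2 := by nlinarith
    have hww : Real.sqrt (1 - c ^ 2) ^ 2 = 1 - c ^ 2 := Real.sq_sqrt hw2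
    have hw : 0 ≤ Real.sqrt (1 - c ^ 2) := Real.sqrt_nonneg _
    have hscr : s * c ≤ r := by linarith
    have hsq : (ρ * (r - s * c)) ^ 2
        ≤ (s * Real.sqrt (r ^ 2 - ρ ^ 2) * Real.sqrt (1 - c ^ 2)) ^ 2 := by
      have hrw : (s * Real.sqrt (r ^ 2 - ρ ^ 2) * Real.sqrt (1 - c ^ 2)) ^ 2
          = s ^ 2 * (r ^ 2 - ρ ^ 2) * (1 - c ^ 2) := by
        rw [mul_pow, mul_pow, haa, hww]
      rw [hrw]
      nlinarith [hG]
    have hle : ρ * (r - s * c) ≤ s * Real.sqrt (r ^ 2 - ρ ^ 2) * Real.sqrt (1 - c ^ 2) := by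
      have h1 : 0 ≤ ρ * (r - s * c) := mul_nonneg hρ.le (by linarith)
      have h2 : 0 ≤ s * Real.sqrt (r ^ 2 - ρ ^ 2) * Real.sqrt (1 - c ^ 2) := by positivity
      exact le_of_pow_le_pow_left₀ two_ne_zero h2 hsq
    have hwα : Real.sqrt (1 - c ^ 2) ≤ Real.arccos c := by
      rw [← Real.sin_arccos]
      exact Real.sin_le hα0
    calc r - s ≤ r - s * c := by linarith [hsc]
      _ ≤ s * Real.sqrt (r ^ 2 - ρ ^ 2) * Real.sqrt (1 - c ^ 2) / ρ := by
          rw [le_div_iff₀ hρ]; linarith [hle]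
      _ ≤ r * Real.sqrt (r ^ 2 - ρ ^ 2) * Real.arccos c / ρ := by gcongr
      _ = r / ρ * Real.sqrt (r ^ 2 - ρ ^ 2) * Real.arccos c := by ring

/-- Points strictly inside a scaled copy of the star-center ball are interior points. -/
private lemma star_interior {n : ℕ} {Ω : Set (EuclideanSpace ℝ (Fin n))} {ρ : ℝ}
    (hstar : ∀ z ∈ Metric.ball (0 : EuclideanSpace ℝ (Fin n)) ρ, StarConvex ℝ z Ω)
    {u : EuclideanSpace ℝ (Fin n)} (hu : u ∈ closure Ω) {t : ℝ} (ht0 : 0 < t) (ht1 : t < 1)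
    {p : EuclideanSpace ℝ (Fin n)} (hp : ‖p - t • u‖ < (1 - t) * ρ) :
    p ∈ interior Ω := by
  set ε : ℝ := (1 - t) * ρ - ‖p - t • u‖ with hε_def
  have hε : 0 < ε := by simp only [hε_def]; linarith
  obtain ⟨u', hu'Ω, hd⟩ := Metric.mem_closure_iff.mp hu (ε / (2 * t)) (by positivity)
  rw [dist_eq_norm] at hd
  have h1t : (0:ℝ) < 1 - t := by linarith
  have hsub : Metric.ball p (ε / 2) ⊆ Ω := by
    intro q hq
    rw [Metric.mem_ball, dist_eq_norm] at hq
    have h1 : q - t • u' = (q - p) + (p - t • u) + t • (u - u') := by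
      rw [smul_sub]; abel
    have htri : ‖q - t • u'‖ ≤ ‖q - p‖ + ‖p - t • u‖ + ‖t • (u - u')‖ := by
      rw [h1]; exact norm_add₃_le
    have h2 : ‖t • (u - u')‖ < ε / 2 := by
      rw [norm_smul, Real.norm_of_nonneg ht0.le]
      calc t * ‖u - u'‖ < t * (ε / (2 * t)) := (mul_lt_mul_iff_right₀ ht0).mpr hd
        _ = ε / 2 := by field_simp
    have hqu : ‖q - t • u'‖ < (1 - t) * ρ := by
      have hεp : ‖p - t • u‖ = (1 - t) * ρ - ε := by rw [hε_def]; ring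
      calc ‖q - t • u'‖ ≤ ‖q - p‖ + ‖p - t • u‖ + ‖t • (u - u')‖ := htri
        _ < ε / 2 + ((1 - t) * ρ - ε) + ε / 2 := by
            rw [hεp] at *; linarith
        _ = (1 - t) * ρ := by ring
    set z : EuclideanSpace ℝ (Fin n) := (1 - t)⁻¹ • (q - t • u') with hz
    have hzball : z ∈ Metric.ball (0 : EuclideanSpace ℝ (Fin n)) ρ := by
      rw [mem_ball_zero_iff, hz, norm_smul, Real.norm_of_nonneg (inv_nonneg.mpr h1t.le)]
      calc (1 - t)⁻¹ * ‖q - t • u'‖ < (1 - t)⁻¹ * ((1 - t) * ρ) := by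
            exact (mul_lt_mul_iff_right₀ (by positivity)).mpr hqu
        _ = ρ := by field_simp
    have hq_eq : q = (1 - t) • z + t • u' := by
      rw [hz, smul_inv_smul₀ h1t.ne']
      abel
    rw [hq_eq]
    exact hstar z hzball hu'Ω h1t.le ht0.le (by ring)
  exact mem_interior.mpr ⟨Metric.ball p (ε / 2), hsub, Metric.isOpen_ball,
    Metric.mem_ball_self (by positivity)⟩

/-- One-sided version of the main theorem. -/
private lemma half_bound
    (n : ℕ) (Ω : Set (EuclideanSpace ℝ (Fin n)))
    (R ρ : ℝ) (hρ : 0 < ρ) (hρR : ρ ≤ R)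
    (hΩR : Ω ⊆ Metric.ball (0 : EuclideanSpace ℝ (Fin n)) R)
    (hstar : ∀ z ∈ Metric.ball (0 : EuclideanSpace ℝ (Fin n)) ρ, StarConvex ℝ z Ω)
    (x y : EuclideanSpace ℝ (Fin n)) (hx : x ∈ frontier Ω) (hy : y ∈ frontier Ω) :
    ‖x‖ - ‖y‖ ≤ (R / ρ) * Real.sqrt (R ^ 2 - ρ ^ 2) *
      Real.arccos (⟪x, y⟫ / (‖x‖ * ‖y‖)) := by
  have hxcl : x ∈ closure Ω := frontier_subset_closure hx
  have hycl : y ∈ closure Ω := frontier_subset_closure hy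
  have hΩne : Ω.Nonempty := by
    by_contra hne
    rw [Set.not_nonempty_iff_eq_empty] at hne
    rw [hne, closure_empty] at hxcl
    exact hxcl
  have hball : Metric.ball (0 : EuclideanSpace ℝ (Fin n)) ρ ⊆ Ω := fun z hz =>
    (hstar z hz).mem hΩne
  have hnint : ∀ w : EuclideanSpace ℝ (Fin n), w ∈ frontier Ω → ρ ≤ ‖w‖ := by
    intro w hw
    by_contra hcon
    push_neg at hcon
    have : w ∈ interior Ω :=
      interior_maximal hball Metric.isOpen_ball (mem_ball_zero_iff.mpr hcon)
    exact hw.2 this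
  have hρx : ρ ≤ ‖x‖ := hnint x hx
  have hρy : ρ ≤ ‖y‖ := hnint y hy
  have hxR : ‖x‖ ≤ R := by
    have hcl : closure Ω ⊆ Metric.closedBall (0 : EuclideanSpace ℝ (Fin n)) R :=
      closure_minimal (hΩR.trans Metric.ball_subset_closedBall) Metric.isClosed_closedBall
    exact mem_closedBall_zero_iff.mp (hcl hxcl)
  have hyint : y ∉ interior Ω := hy.2
  -- Build the interpolation inequality
  have hkey : ∀ t : ℝ, 0 ≤ t → t ≤ 1 →
      (1 - t) ^ 2 * ρ ^ 2 ≤ ‖y‖ ^ 2 - 2 * t * ⟪x, y⟫ + t ^ 2 * ‖x‖ ^ 2 := by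
    intro t ht0 ht1
    have hnorm : ‖y - t • x‖ ^ 2 = ‖y‖ ^ 2 - 2 * t * ⟪x, y⟫ + t ^ 2 * ‖x‖ ^ 2 := by
      rw [norm_sub_sq_real, real_inner_smul_right, real_inner_comm, norm_smul,
        Real.norm_of_nonneg ht0, mul_pow]
      ring
    rcases eq_or_lt_of_le ht0 with h0 | h0
    · -- t = 0
      rw [← h0]
      have : ρ ^ 2 ≤ ‖y‖ ^ 2 := by nlinarith
      simpa using this
    rcases eq_or_lt_of_le ht1 with h1 | h1
    · -- t = 1
      rw [h1]
      have := hnorm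
      rw [h1] at this
      nlinarith [sq_nonneg ‖y - (1:ℝ) • x‖, this]
    -- 0 < t < 1
    have hge : (1 - t) * ρ ≤ ‖y - t • x‖ := by
      by_contra hcon
      push_neg at hcon
      exact hyint (star_interior hstar hxcl h0 h1 hcon)
    have h2 : ((1 - t) * ρ) ^ 2 ≤ ‖y - t • x‖ ^ 2 := by
      have hnn : 0 ≤ (1 - t) * ρ := mul_nonneg (by linarith) hρ.le
      nlinarith [hge, norm_nonneg (y - t • x)]
    rw [hnorm] at h2
    nlinarith [h2]
  -- reduce to the scalar lemma
  set r := ‖x‖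
  set s := ‖y‖
  have hs : 0 < s := lt_of_lt_of_le hρ hρy
  have hr : 0 < r := lt_of_lt_of_le hρ hρx
  set c : ℝ := ⟪x, y⟫ / (r * s) with hc_def
  have hcabs : |c| ≤ 1 := abs_real_inner_div_norm_mul_norm_le_one x y
  have hc1 : -1 ≤ c := neg_le_of_abs_le hcabs
  have hc2 : c ≤ 1 := le_of_abs_le hcabs
  have hinner : ⟪x, y⟫ = r * s * c := by
    rw [hc_def, mul_div_cancel₀]
    positivity
  rcases le_total s r with hsr | hsr
  · have hmain : r - s ≤ r / ρ * Real.sqrt (r ^ 2 - ρ ^ 2) * Real.arccos c := by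
      apply key_scalar ρ r s c hρ hρy hsr hc1 hc2
      intro t ht0 ht1
      have := hkey t ht0 ht1
      rw [hinner] at this
      linarith
    have hmono : r / ρ * Real.sqrt (r ^ 2 - ρ ^ 2) * Real.arccos c
        ≤ R / ρ * Real.sqrt (R ^ 2 - ρ ^ 2) * Real.arccos c := by
      have hsq : Real.sqrt (r ^ 2 - ρ ^ 2) ≤ Real.sqrt (R ^ 2 - ρ ^ 2) := by
        apply Real.sqrt_le_sqrt
        nlinarith
      have hα0 : 0 ≤ Real.arccos c := Real.arccos_nonneg c
      have h1 : r / ρ ≤ R / ρ := by gcongr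
      have h2 : 0 ≤ r / ρ := div_nonneg hr.le hρ.le
      nlinarith [Real.sqrt_nonneg (r ^ 2 - ρ ^ 2), Real.sqrt_nonneg (R ^ 2 - ρ ^ 2),
        mul_le_mul h1 hsq (Real.sqrt_nonneg _) (div_nonneg (by linarith) hρ.le)]
    linarith
  · have hRHS : 0 ≤ R / ρ * Real.sqrt (R ^ 2 - ρ ^ 2) * Real.arccos c :=
      mul_nonneg (mul_nonneg (div_nonneg (by linarith) hρ.le) (Real.sqrt_nonneg _)) (Real.arccos_nonneg c)
    linarith

/-- Lemma 3 (`lemma:magnitudefunctionsarelipschitz`): for a set `Ω ⊆ ball 0 R` that is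
star-shaped with respect to the ball `ball 0 ρ`, any two boundary points `x, y`
with angle `α` satisfy `|‖x‖ - ‖y‖| ≤ (R/ρ) * √(R² - ρ²) * α`. -/
theorem magnitude_function_lipschitz
    (n : ℕ) (hn : 1 ≤ n) (Ω : Set (EuclideanSpace ℝ (Fin n)))
    (R ρ : ℝ) (hρ : 0 < ρ) (hρR : ρ ≤ R)
    (hΩR : Ω ⊆ Metric.ball (0 : EuclideanSpace ℝ (Fin n)) R)
    (hstar : ∀ z ∈ Metric.ball (0 : EuclideanSpace ℝ (Fin n)) ρ, StarConvex ℝ z Ω)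
    (x y : EuclideanSpace ℝ (Fin n)) (hx : x ∈ frontier Ω) (hy : y ∈ frontier Ω) :
    |‖x‖ - ‖y‖| ≤ (R / ρ) * Real.sqrt (R ^ 2 - ρ ^ 2) *
      Real.arccos (⟪x, y⟫ / (‖x‖ * ‖y‖)) := by
  rw [abs_sub_le_iff]
  constructor
  · exact half_bound n Ω R ρ hρ hρR hΩR hstar x y hx hy
  · have := half_bound n Ω R ρ hρ hρR hΩR hstar y x hy hx
    rwa [real_inner_comm, mul_comm ‖y‖ ‖x‖] at this
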